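/- Let G be a group, A ⊆ G a nonempty finite set, and H a finite subgroup of G with H ⊆ Stab^r_N(A) for some real N > 0. Then for every ε ∈ (0,1), |Z^ℓ_ε(A,H)| ≤ N/(2ε²). -/

import Mathlib

open scoped Pointwise symmDiff

/-- `Stab^ℓ_N(A) = {x : |xA △ A| ≤ N}`. -/
def stabL {G : Type*} [Group G] (A : Set G) (N : ℝ) : Set G :=
  {x : G | (((x • A) ∆ A).ncard : ℝ) ≤ N}

/-- `Stab^r_N(A) = {x : |Ax △ A| ≤ N}`. -/
def stabR {G : Type*} [Group G] (A : Set G) (N : ℝ) : Set G :=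
  {x : G | (((A * {x}) ∆ A).ncard : ℝ) ≤ N}

/-- `St^ℓ_ε(A) = Stab^ℓ_{ε|A|}(A)`. -/
def stL {G : Type*} [Group G] (A : Set G) (ε : ℝ) : Set G := stabL A (ε * A.ncard)

/-- `St^r_ε(A) = Stab^r_{ε|A|}(A)`. -/
def stR {G : Type*} [Group G] (A : Set G) (ε : ℝ) : Set G := stabR A (ε * A.ncard)

/-- A family of sets shatters `S` if every subset of `S` is cut out by a member of the family. -/
def Shatters {α : Type*} (F : Set (Set α)) (S : Set α) : Prop :=
  ∀ T ⊆ S, ∃ f ∈ F, S ∩ f = T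

/-- VC-dimension of a set system: the supremum of cardinalities of finite shattered sets. -/
noncomputable def vcDim {α : Type*} (F : Set (Set α)) : ℕ∞ :=
  ⨆ (S : Finset α) (_ : Shatters F ↑S), (S.card : ℕ∞)

/-- The family of left translates `{xA : x ∈ B}`. -/
def leftFam {G : Type*} [Group G] (A B : Set G) : Set (Set G) := (fun x => x • A) '' B

/-- The family of right translates `{Ax : x ∈ B}`. -/
def rightFam {G : Type*} [Group G] (A B : Set G) : Set (Set G) := (fun x => A * {x}) '' B

/-- `Z^ℓ_ε(A,X) = {g : min(|gX ∩ A|, |gX \ A|) ≥ ε|X|}`. -/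
def Zl {G : Type*} [Group G] (A X : Set G) (ε : ℝ) : Set G :=
  {g : G | ε * X.ncard ≤ min (((g • X) ∩ A).ncard : ℝ) (((g • X) \ A).ncard : ℝ)}

/-- Remark 6.3 of the paper: if a finite subgroup `H` is contained in
`Stab^r_N(A)`, then `|Z^ℓ_ε(A,H)| ≤ N/(2ε²)` for every `ε ∈ (0,1)`. -/
theorem afz_regularity {G : Type*} [Group G] (A : Set G)
    (hA : A.Finite) (hAne : A.Nonempty)
    (H : Subgroup G) (hHfin : (H : Set G).Finite)
    (N : ℝ) (hN : 0 < N) (hHs : (H : Set G) ⊆ stabR A N) :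
    ∀ ε : ℝ, 0 < ε → ε < 1 →
      ((Zl A (H : Set G) ε).ncard : ℝ) ≤ N / (2 * ε ^ 2) := by
  classical
  intro ε hε hε1
  set Hs : Set G := (H : Set G) with hHsdef
  set Kf : Finset G := hHfin.toFinset with hKfdef
  have hKfcoe : (Kf : Set G) = Hs := hHfin.coe_toFinset
  have hmemK : ∀ x : G, x ∈ Kf ↔ x ∈ Hs := fun x => hHfin.mem_toFinset
  have hK1 : (1:G) ∈ Kf := (hmemK 1).mpr H.one_mem
  have hKpos : 0 < Kf.card := Finset.card_pos.mpr ⟨1, hK1⟩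
  have hHncard : Hs.ncard = Kf.card := by rw [← hKfcoe, Set.ncard_coe_finset]
  -- finiteness of Z
  have hZsub : Zl A Hs ε ⊆ A * Hs := by
    intro g hg
    have h1 : ε * (Hs.ncard:ℝ) ≤ ((g • Hs ∩ A).ncard : ℝ) :=
      le_trans hg (min_le_left _ _)
    have hpos : (0:ℝ) < ε * (Hs.ncard:ℝ) := by
      have h2 : 0 < Hs.ncard := (Set.ncard_pos hHfin).mpr ⟨1, H.one_mem⟩
      have : (0:ℝ) < (Hs.ncard:ℝ) := by exact_mod_cast h2
      positivity
    have hne : (g • Hs ∩ A).Nonempty := by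
      rw [Set.nonempty_iff_ne_empty]
      intro h
      rw [h] at h1
      simp at h1
      linarith
    obtain ⟨y, hy1, hy2⟩ := hne
    obtain ⟨h0, hh0, rfl⟩ := hy1
    rw [Set.mem_mul]
    refine ⟨g • h0, hy2, h0⁻¹, H.inv_mem hh0, ?_⟩
    simp [smul_eq_mul]
  have hZfin : (Zl A Hs ε).Finite := (hA.mul hHfin).subset hZsub
  set Zf : Finset G := hZfin.toFinset with hZfdef
  have hZcoe : (Zf : Set G) = Zl A Hs ε := hZfin.coe_toFinset
  have hZcard : (Zl A Hs ε).ncard = Zf.card := by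
    rw [← hZcoe, Set.ncard_coe_finset]
  -- symmetric differences
  set D : G → Set G := fun x => ((A * {x}) ∆ A) with hDdef
  have hDfin : ∀ x, (D x).Finite := by
    intro x
    have h1 : (A * ({x}:Set G)).Finite := hA.mul (Set.finite_singleton x)
    have : D x = ((A * {x}) \ A) ∪ (A \ (A * {x})) := by
      simp [hDdef, Set.symmDiff_def]
    rw [this]
    exact h1.diff.union hA.diff
  set Df : G → Finset G := fun x => (hDfin x).toFinset with hDfdef
  have hmemDf : ∀ b x, b ∈ Df x ↔ ((b * x⁻¹ ∈ A ∧ b ∉ A) ∨ (b ∈ A ∧ b * x⁻¹ ∉ A)) := by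
    intro b x
    have hmul : b ∈ A * ({x}:Set G) ↔ b * x⁻¹ ∈ A := by
      rw [Set.mul_singleton]
      constructor
      · rintro ⟨a, ha, rfl⟩
        simpa using ha
      · intro h
        exact ⟨b * x⁻¹, h, by group⟩
    rw [hDfdef]
    simp only [Set.Finite.mem_toFinset, hDdef, Set.mem_symmDiff]
    rw [hmul]
  -- coset finsets
  set Cf : G → Finset G := fun g => Kf.image (fun h => g * h) with hCfdef
  have hmemCf : ∀ g b, b ∈ Cf g ↔ g⁻¹ * b ∈ Hs := by
    intro g b
    simp only [hCfdef, Finset.mem_image, hmemK]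
    constructor
    · rintro ⟨h, hh, rfl⟩
      simpa using hh
    · intro h
      exact ⟨g⁻¹ * b, h, by group⟩
  have hCfcoe : ∀ g, (Cf g : Set G) = g • Hs := by
    intro g
    ext b
    rw [Finset.mem_coe, hmemCf]
    constructor
    · intro h
      exact ⟨g⁻¹ * b, h, by show g * (g⁻¹ * b) = b; group⟩
    · rintro ⟨y, hy, rfl⟩
      simpa [smul_eq_mul] using hy
  -- counts within a coset
  have hcardA : ∀ g, ((g • Hs) ∩ A).ncard = ((Cf g).filter (fun c => c ∈ A)).card := by
    intro g
    rw [← Set.ncard_coe_finset]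
    congr 1
    rw [Finset.coe_filter]
    rw [← hCfcoe g]
    ext b
    simp [Set.mem_sep_iff]
  have hcardC : ∀ g, ((g • Hs) \ A).ncard = ((Cf g).filter (fun c => c ∉ A)).card := by
    intro g
    rw [← Set.ncard_coe_finset]
    congr 1
    rw [Finset.coe_filter]
    rw [← hCfcoe g]
    ext b
    simp [Set.mem_sep_iff]
  -- inner bijection count
  have key1 : ∀ g : G, ∀ b ∈ Cf g,
      (Kf.filter (fun x => b ∈ Df x)).card
        = if b ∈ A then ((Cf g).filter (fun c => c ∉ A)).card
          else ((Cf g).filter (fun c => c ∈ A)).card := by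
    intro g b hb
    by_cases hbA : b ∈ A
    · rw [if_pos hbA]
      apply Finset.card_bij' (fun x _ => b * x⁻¹) (fun c _ => c⁻¹ * b)
      · intro x hx
        rw [Finset.mem_filter] at hx
        obtain ⟨hxK, hxD⟩ := hx
        rw [hmemDf] at hxD
        rw [Finset.mem_filter]
        constructor
        · rw [hmemCf]
          have hbH : g⁻¹ * b ∈ Hs := (hmemCf g b).mp hb
          have : g⁻¹ * (b * x⁻¹) = (g⁻¹ * b) * x⁻¹ := by group
          rw [this]
          exact H.mul_mem hbH (H.inv_mem ((hmemK x).mp hxK))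
        · rcases hxD with ⟨h1, h2⟩ | ⟨h1, h2⟩
          · exact absurd hbA h2
          · exact h2
      · intro c hc
        rw [Finset.mem_filter] at hc
        obtain ⟨hcC, hcA⟩ := hc
        rw [Finset.mem_filter]
        constructor
        · rw [hmemK]
          have hbH : g⁻¹ * b ∈ Hs := (hmemCf g b).mp hb
          have hcH : g⁻¹ * c ∈ Hs := (hmemCf g c).mp hcC
          have : c⁻¹ * b = (g⁻¹ * c)⁻¹ * (g⁻¹ * b) := by group
          rw [this]
          exact H.mul_mem (H.inv_mem hcH) hbH
        · rw [hmemDf]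
          right
          refine ⟨hbA, ?_⟩
          have : b * (c⁻¹ * b)⁻¹ = c := by group
          rw [this]
          exact hcA
      · intro x hx; group
      · intro c hc; group
    · rw [if_neg hbA]
      apply Finset.card_bij' (fun x _ => b * x⁻¹) (fun c _ => c⁻¹ * b)
      · intro x hx
        rw [Finset.mem_filter] at hx
        obtain ⟨hxK, hxD⟩ := hx
        rw [hmemDf] at hxD
        rw [Finset.mem_filter]
        constructor
        · rw [hmemCf]
          have hbH : g⁻¹ * b ∈ Hs := (hmemCf g b).mp hb
          have : g⁻¹ * (b * x⁻¹) = (g⁻¹ * b) * x⁻¹ := by group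
          rw [this]
          exact H.mul_mem hbH (H.inv_mem ((hmemK x).mp hxK))
        · rcases hxD with ⟨h1, h2⟩ | ⟨h1, h2⟩
          · exact h1
          · exact absurd h1 hbA
      · intro c hc
        rw [Finset.mem_filter] at hc
        obtain ⟨hcC, hcA⟩ := hc
        rw [Finset.mem_filter]
        constructor
        · rw [hmemK]
          have hbH : g⁻¹ * b ∈ Hs := (hmemCf g b).mp hb
          have hcH : g⁻¹ * c ∈ Hs := (hmemCf g c).mp hcC
          have : c⁻¹ * b = (g⁻¹ * c)⁻¹ * (g⁻¹ * b) := by group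
          rw [this]
          exact H.mul_mem (H.inv_mem hcH) hbH
        · rw [hmemDf]
          left
          refine ⟨?_, hbA⟩
          have : b * (c⁻¹ * b)⁻¹ = c := by group
          rw [this]
          exact hcA
      · intro x hx; group
      · intro c hc; group
  -- the per-g double counting identity
  have key2 : ∀ g : G, ∑ x ∈ Kf, ((Cf g) ∩ Df x).card
      = 2 * ((Cf g).filter (fun c => c ∈ A)).card * ((Cf g).filter (fun c => c ∉ A)).card := by
    intro g
    have h1 : ∀ x ∈ Kf, ((Cf g) ∩ Df x).card = ∑ b ∈ Cf g, if b ∈ Df x then 1 else 0 := by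
      intro x _
      rw [← Finset.filter_mem_eq_inter, Finset.card_filter]
    rw [Finset.sum_congr rfl h1, Finset.sum_comm]
    have h2 : ∀ b ∈ Cf g, ∑ x ∈ Kf, (if b ∈ Df x then 1 else 0)
        = if b ∈ A then ((Cf g).filter (fun c => c ∉ A)).card
          else ((Cf g).filter (fun c => c ∈ A)).card := by
      intro b hb
      rw [← Finset.card_filter]
      exact key1 g b hb
    rw [Finset.sum_congr rfl h2]
    rw [← Finset.sum_filter_add_sum_filter_not (Cf g) (fun b => b ∈ A)]
    rw [Finset.sum_congr rfl (fun b hb => if_pos (Finset.mem_filter.mp hb).2),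
        Finset.sum_congr rfl (fun b hb => if_neg (Finset.mem_filter.mp hb).2)]
    rw [Finset.sum_const, Finset.sum_const]
    simp [Nat.smul_one_eq_cast]
    ring
  -- lower bound per g ∈ Zf
  have key2' : ∀ g ∈ Zf, 2 * ε^2 * (Kf.card:ℝ)^2 ≤ ∑ x ∈ Kf, (((Cf g) ∩ Df x).card : ℝ) := by
    intro g hg
    have hgZ : g ∈ Zl A Hs ε := hZfin.mem_toFinset.mp hg
    have hmin := hgZ
    rw [Zl, Set.mem_setOf_eq] at hmin
    have ha : ε * (Kf.card:ℝ) ≤ (((Cf g).filter (fun c => c ∈ A)).card : ℝ) := by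
      have := le_trans hmin (min_le_left _ _)
      rw [hcardA g] at this
      rw [hHncard] at this
      exact_mod_cast this
    have hc : ε * (Kf.card:ℝ) ≤ (((Cf g).filter (fun c => c ∉ A)).card : ℝ) := by
      have := le_trans hmin (min_le_right _ _)
      rw [hcardC g] at this
      rw [hHncard] at this
      exact_mod_cast this
    have hsum : (∑ x ∈ Kf, (((Cf g) ∩ Df x).card : ℝ))
        = 2 * (((Cf g).filter (fun c => c ∈ A)).card : ℝ)
          * (((Cf g).filter (fun c => c ∉ A)).card : ℝ) := by
      rw [← Nat.cast_sum]
      rw [key2 g]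
      push_cast
      ring
    rw [hsum]
    have hεK : (0:ℝ) ≤ ε * (Kf.card:ℝ) := by positivity
    nlinarith [ha, hc, hεK]
  -- upper bound per x ∈ Kf
  have key3 : ∀ x : G, ∑ g ∈ Zf, ((Cf g) ∩ Df x).card ≤ (Df x).card * Kf.card := by
    intro x
    have h1 : ∀ g ∈ Zf, ((Cf g) ∩ Df x).card = ∑ d ∈ Df x, if d ∈ Cf g then 1 else 0 := by
      intro g _
      rw [Finset.inter_comm, ← Finset.filter_mem_eq_inter, Finset.card_filter]
    rw [Finset.sum_congr rfl h1, Finset.sum_comm]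
    have h2 : ∀ d ∈ Df x, (∑ g ∈ Zf, if d ∈ Cf g then 1 else 0) ≤ Kf.card := by
      intro d _
      rw [← Finset.card_filter]
      have hsub : Zf.filter (fun g => d ∈ Cf g) ⊆ Kf.image (fun h => d * h⁻¹) := by
        intro g hg
        rw [Finset.mem_filter] at hg
        obtain ⟨_, hgC⟩ := hg
        rw [hmemCf] at hgC
        rw [Finset.mem_image]
        refine ⟨g⁻¹ * d, (hmemK _).mpr hgC, by group⟩
      calc (Zf.filter (fun g => d ∈ Cf g)).card
          ≤ (Kf.image (fun h => d * h⁻¹)).card := Finset.card_le_card hsub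
        _ ≤ Kf.card := Finset.card_image_le
    calc ∑ d ∈ Df x, ∑ g ∈ Zf, (if d ∈ Cf g then 1 else 0)
        ≤ ∑ _d ∈ Df x, Kf.card := Finset.sum_le_sum h2
      _ = (Df x).card * Kf.card := by rw [Finset.sum_const, smul_eq_mul]
  have key4 : ∀ x ∈ Kf, ((Df x).card : ℝ) ≤ N := by
    intro x hx
    have hxH : x ∈ Hs := (hmemK x).mp hx
    have := hHs hxH
    rw [stabR, Set.mem_setOf_eq] at this
    have hcard : (D x).ncard = (Df x).card := by
      rw [← Set.ncard_coe_finset (Df x)]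
      congr 1
      simp only [hDfdef]
      exact ((hDfin x).coe_toFinset).symm
    rw [← hcard]
    exact this
  -- assemble
  have hmain : 2 * ε^2 * (Kf.card:ℝ)^2 * (Zf.card:ℝ) ≤ N * (Kf.card:ℝ)^2 := by
    calc 2 * ε^2 * (Kf.card:ℝ)^2 * (Zf.card:ℝ)
        = ∑ _g ∈ Zf, 2 * ε^2 * (Kf.card:ℝ)^2 := by
          rw [Finset.sum_const, nsmul_eq_mul]; ring
      _ ≤ ∑ g ∈ Zf, ∑ x ∈ Kf, (((Cf g) ∩ Df x).card : ℝ) := Finset.sum_le_sum key2'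
      _ = ∑ x ∈ Kf, ∑ g ∈ Zf, (((Cf g) ∩ Df x).card : ℝ) := Finset.sum_comm
      _ ≤ ∑ _x ∈ Kf, N * (Kf.card:ℝ) := by
          apply Finset.sum_le_sum
          intro x hx
          have h1 : (∑ g ∈ Zf, (((Cf g) ∩ Df x).card : ℝ)) ≤ ((Df x).card : ℝ) * (Kf.card:ℝ) := by
            rw [← Nat.cast_sum]
            have := key3 x
            calc ((∑ g ∈ Zf, ((Cf g) ∩ Df x).card : ℕ) : ℝ)
                ≤ (((Df x).card * Kf.card : ℕ) : ℝ) := by exact_mod_cast this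
              _ = ((Df x).card : ℝ) * (Kf.card:ℝ) := by push_cast; ring
          refine le_trans h1 ?_
          apply mul_le_mul_of_nonneg_right (key4 x hx) (by positivity)
      _ = N * (Kf.card:ℝ)^2 := by rw [Finset.sum_const, nsmul_eq_mul]; ring
  have hK2 : (0:ℝ) < (Kf.card:ℝ)^2 := by
    have : (0:ℝ) < (Kf.card:ℝ) := by exact_mod_cast hKpos
    positivity
  rw [hZcard]
  rw [le_div_iff₀ (by positivity)]
  nlinarith [hmain, hK2]
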